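/- arXiv:2107.01537 — 4 statements merged into one kernel-verified Lean document; each statement's English description precedes it below -/
import Mathlib

section
/- Let M ≥ 1 and let Σ be a symmetric positive definite M × M real matrix. Let D be the diagonal matrix whose diagonal entries are the diagonal entries of Σ, i.e., D = diagonal(Σ₁₁, …, Σ_MM). Then for every x ∈ ℝ^M, xᵀ D⁻¹ x ≤ M · (xᵀ Σ⁻¹ x); equivalently, the matrix M·Σ⁻¹ − D⁻¹ is positive semidefinite. -/
open Matrix

lemma symm_mulVec_dot {M : ℕ} {A : Matrix (Fin M) (Fin M) ℝ} (hA : Aᵀ = A)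
    (a b : Fin M → ℝ) : (A *ᵥ a) ⬝ᵥ b = a ⬝ᵥ (A *ᵥ b) := by
  rw [dotProduct_comm, dotProduct_mulVec, ← mulVec_transpose, hA, dotProduct_comm]

/-- For a symmetric positive definite `M × M` matrix `Sig` with diagonal part `D`,
`xᵀ D⁻¹ x ≤ M · xᵀ Sig⁻¹ x` for all `x`; equivalently `M·Sig⁻¹ − D⁻¹` is positive semidefinite. -/
theorem diag_inv_quadratic_le (M : ℕ) (hM : 1 ≤ M)
    (Sig : Matrix (Fin M) (Fin M) ℝ) (hSig : Sig.PosDef)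
    (D : Matrix (Fin M) (Fin M) ℝ) (hD : D = Matrix.diagonal (fun i => Sig i i)) :
    (∀ x : Fin M → ℝ, x ⬝ᵥ D⁻¹ *ᵥ x ≤ (M : ℝ) * (x ⬝ᵥ Sig⁻¹ *ᵥ x)) ∧
      ((M : ℝ) • Sig⁻¹ - D⁻¹).PosSemidef := by
  have hpsd := hSig.posSemidef
  open scoped MatrixOrder in
  set S := CFC.sqrt Sig with hSdef
  open scoped MatrixOrder in
  have hSS : S * S = Sig := CFC.sqrt_mul_sqrt_self Sig hpsd.nonneg
  open scoped MatrixOrder in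
  have hSsym : Sᵀ = S := (CFC.sqrt_nonneg Sig).posSemidef.1
  have hdet : Sig.det ≠ 0 := ne_of_gt hSig.det_pos
  have hdetS : S.det ≠ 0 := by
    intro h
    apply hdet
    rw [← hSS, det_mul, h, mul_zero]
  have hSinv : S * S⁻¹ = 1 := mul_nonsing_inv S (isUnit_iff_ne_zero.mpr hdetS)
  have hSiginv : Sig⁻¹ = S⁻¹ * S⁻¹ := by rw [← hSS, Matrix.mul_inv_rev]
  have hSinvsym : (S⁻¹)ᵀ = S⁻¹ := by rw [transpose_nonsing_inv, hSsym]
  have hdiagpos : ∀ i, 0 < Sig i i := fun i => by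
    have h := hSig.dotProduct_mulVec_pos (x := Pi.single i 1) (by
      intro h
      have := congrFun h i
      simp at this)
    simpa [single_dotProduct, mulVec_single] using h
  -- key pointwise bound
  have key : ∀ (x : Fin M → ℝ) (i : Fin M),
      (x i) ^ 2 ≤ Sig i i * (x ⬝ᵥ Sig⁻¹ *ᵥ x) := by
    intro x i
    set e : Fin M → ℝ := Pi.single i 1 with he
    set u := S *ᵥ e with hu
    set v := S⁻¹ *ᵥ x with hv
    have huv : ∑ j, u j * v j = x i := by
      have : (∑ j, u j * v j) = u ⬝ᵥ v := rfl
      rw [this, hu, hv, symm_mulVec_dot hSsym, mulVec_mulVec, hSinv, one_mulVec, he,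
        single_dotProduct, one_mul]
    have huu : ∑ j, u j ^ 2 = Sig i i := by
      have h1 : (∑ j, u j ^ 2) = u ⬝ᵥ u := by simp [dotProduct, sq]
      rw [h1, hu, symm_mulVec_dot hSsym, mulVec_mulVec, hSS, he, single_dotProduct]
      simp [mulVec_single]
    have hvv : ∑ j, v j ^ 2 = x ⬝ᵥ Sig⁻¹ *ᵥ x := by
      have h1 : (∑ j, v j ^ 2) = v ⬝ᵥ v := by simp [dotProduct, sq]
      rw [h1, hv, symm_mulVec_dot hSinvsym, mulVec_mulVec, ← hSiginv]
    have := Finset.sum_mul_sq_le_sq_mul_sq Finset.univ u v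
    rw [huv, huu, hvv] at this
    exact this
  have hDinv : D⁻¹ = Matrix.diagonal (fun i => (Sig i i)⁻¹) := by
    rw [hD]
    apply inv_eq_right_inv
    rw [diagonal_mul_diagonal]
    convert diagonal_one with i
    exact mul_inv_cancel₀ (hdiagpos i).ne'
  have main : ∀ x : Fin M → ℝ, x ⬝ᵥ D⁻¹ *ᵥ x ≤ (M : ℝ) * (x ⬝ᵥ Sig⁻¹ *ᵥ x) := by
    intro x
    set q := x ⬝ᵥ Sig⁻¹ *ᵥ x with hq
    have hx : x ⬝ᵥ D⁻¹ *ᵥ x = ∑ i, x i * ((Sig i i)⁻¹ * x i) := by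
      rw [hDinv]
      simp [dotProduct, mulVec_diagonal]
    rw [hx]
    have hle : ∀ i ∈ Finset.univ, x i * ((Sig i i)⁻¹ * x i) ≤ q := by
      intro i _
      have hpos := hdiagpos i
      have h := key x i
      rw [show x i * ((Sig i i)⁻¹ * x i) = (x i) ^ 2 / Sig i i by ring]
      rw [div_le_iff₀ hpos, mul_comm]
      exact h
    calc ∑ i, x i * ((Sig i i)⁻¹ * x i) ≤ ∑ _i : Fin M, q := Finset.sum_le_sum hle
      _ = (M : ℝ) * q := by simp [Finset.sum_const, mul_comm]
  refine ⟨main, posSemidef_iff_dotProduct_mulVec.mpr ⟨?_, ?_⟩⟩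
  · have h1 : (Sig⁻¹).IsHermitian := hSig.inv.1
    have h2 : (D⁻¹).IsHermitian := by
      rw [hDinv]; exact isHermitian_diagonal _
    show _ = _
    rw [conjTranspose_sub, conjTranspose_smul, h1.eq, h2.eq, star_trivial]
  · intro x
    have := main x
    simp only [star_trivial, sub_mulVec, dotProduct_sub, smul_mulVec, dotProduct_smul,
      smul_eq_mul]
    linarith
end

section
/- Let τ > 0, let N be a finite measure on [0, τ], let Y : [0, τ] → ℝ be a bounded measurable nonnegative function, and let λ : [0, τ] → ℝ be a measurable function with λ(t) > 0 for all t and λ integrable on [0, τ], such that t ↦ log λ(t) is N-integrable. Let a : ℝ × [0, τ] → ℝ be measurable, bounded (|a(x,t)| ≤ M for all x, t), and continuous in its first argument for each fixed t. For ε ∈ ℝ define λ_ε(t) = λ(t)·exp(∫₀^ε a(x,t) dx) and the loss ℓ(ε) = −∫ log λ_ε(t) dN(t) + ∫₀^τ Y(t) λ_ε(t) dt. Then ℓ is differentiable at every ε, with ℓ'(ε) = −∫ a(ε,t) dN(t) + ∫₀^τ Y(t) a(ε,t) λ_ε(t) dt. -/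
open MeasureTheory

/-- Differentiability of the negative log-likelihood loss along the universal
least favorable submodel `λ_ε(t) = λ(t)·exp(∫₀^ε a(x,t) dx)`, with derivative
`ℓ'(ε) = −∫ a(ε,t) dN(t) + ∫₀^τ Y(t) a(ε,t) λ_ε(t) dt`. -/
theorem loss_hasDerivAt_along_ulfm (τ : ℝ) (hτ : 0 < τ)
    (N : Measure ℝ) [IsFiniteMeasure N] (hNsupp : N (Set.Icc 0 τ)ᶜ = 0)
    (Y : ℝ → ℝ) (hYmeas : Measurable Y) (hYnonneg : ∀ t, 0 ≤ Y t)
    (CY : ℝ) (hYbd : ∀ t, Y t ≤ CY)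
    (lam : ℝ → ℝ) (hlam_meas : Measurable lam) (hlam_pos : ∀ t, 0 < lam t)
    (hlam_int : IntegrableOn lam (Set.Icc 0 τ))
    (hlog_int : Integrable (fun t => Real.log (lam t)) N)
    (a : ℝ → ℝ → ℝ) (ha_meas : Measurable (Function.uncurry a))
    (M : ℝ) (ha_bd : ∀ x t, |a x t| ≤ M)
    (ha_cont : ∀ t, Continuous (fun x => a x t))
    (lamε : ℝ → ℝ → ℝ)
    (hlamε : ∀ ε t, lamε ε t = lam t * Real.exp (∫ x in (0:ℝ)..ε, a x t))
    (loss : ℝ → ℝ)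
    (hloss : ∀ ε, loss ε =
      -(∫ t, Real.log (lamε ε t) ∂N) + ∫ t in Set.Icc (0:ℝ) τ, Y t * lamε ε t) :
    ∀ ε : ℝ, HasDerivAt loss
      (-(∫ t, a ε t ∂N) + ∫ t in Set.Icc (0:ℝ) τ, Y t * a ε t * lamε ε t) ε := by
  have hM0 : (0:ℝ) ≤ M := le_trans (abs_nonneg _) (ha_bd 0 0)
  have hCY0 : (0:ℝ) ≤ CY := le_trans (hYnonneg 0) (hYbd 0)
  set g : ℝ → ℝ → ℝ := fun ε t => ∫ x in (0:ℝ)..ε, a x t with hg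
  have ha_meas' : ∀ ε, Measurable fun t => a ε t := fun ε =>
    ha_meas.comp measurable_prodMk_left
  have hg_meas : ∀ ε, Measurable fun t => g ε t := by
    intro ε
    have hsm : StronglyMeasurable fun p : ℝ × ℝ => a p.2 p.1 :=
      (ha_meas.comp measurable_swap).stronglyMeasurable
    have h1 : StronglyMeasurable fun t =>
        ∫ x, a x t ∂(volume.restrict (Set.uIoc (0:ℝ) ε)) :=
      hsm.integral_prod_right' (ν := volume.restrict (Set.uIoc (0:ℝ) ε))
    simp only [hg, intervalIntegral.intervalIntegral_eq_integral_uIoc, smul_eq_mul]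
    exact measurable_const.mul h1.measurable
  have hg_bd : ∀ ε t, |g ε t| ≤ M * |ε| := by
    intro ε t
    have := intervalIntegral.norm_integral_le_of_norm_le_const
      (a := (0:ℝ)) (b := ε) (C := M) (f := fun x => a x t)
      (fun x _ => by simpa [Real.norm_eq_abs] using ha_bd x t)
    simpa [Real.norm_eq_abs] using this
  have hFTC : ∀ t ε, HasDerivAt (fun ε => g ε t) (a ε t) ε := fun t ε =>
    intervalIntegral.integral_hasDerivAt_right ((ha_cont t).intervalIntegrable 0 ε)
      ((ha_cont t).stronglyMeasurableAtFilter _ _) (ha_cont t).continuousAt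
  intro ε₀
  -- Term 1: ε ↦ ∫ (log λ t + g ε t) dN
  have hgint : ∀ ε, Integrable (fun t => g ε t) N := by
    intro ε
    refine (integrable_const (M * |ε|)).mono' ((hg_meas ε).aestronglyMeasurable)
      (Filter.Eventually.of_forall fun t => ?_)
    simpa [Real.norm_eq_abs] using hg_bd ε t
  have hT1 := hasDerivAt_integral_of_dominated_loc_of_deriv_le
      (μ := N) (F := fun ε t => Real.log (lam t) + g ε t)
      (F' := fun ε t => a ε t) (x₀ := ε₀) (bound := fun _ => M) (Metric.ball_mem_nhds ε₀ one_pos)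
      (Filter.Eventually.of_forall fun ε =>
        ((Real.measurable_log.comp hlam_meas).add (hg_meas ε)).aestronglyMeasurable)
      (hlog_int.add (hgint ε₀))
      ((ha_meas' ε₀).aestronglyMeasurable)
      (Filter.Eventually.of_forall fun t x _ => by
        simpa [Real.norm_eq_abs] using ha_bd x t)
      (integrable_const M)
      (Filter.Eventually.of_forall fun t x _ =>
        (hFTC t x).const_add (Real.log (lam t)))
  -- Term 2: ε ↦ ∫ Y t * (λ t * exp (g ε t)) on [0, τ]
  have hx_bd : ∀ x ∈ Metric.ball ε₀ (1:ℝ), |x| ≤ |ε₀| + 1 := by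
    intro x hx
    have h1 : |x - ε₀| < 1 := by simpa [Real.dist_eq] using hx
    calc |x| = |x - ε₀ + ε₀| := by ring_nf
    _ ≤ |x - ε₀| + |ε₀| := abs_add_le _ _
    _ ≤ |ε₀| + 1 := by linarith
  have hgle : ∀ x ∈ Metric.ball ε₀ (1:ℝ), ∀ t, g x t ≤ M * (|ε₀| + 1) := by
    intro x hx t
    calc g x t ≤ |g x t| := le_abs_self _
    _ ≤ M * |x| := hg_bd x t
    _ ≤ M * (|ε₀| + 1) := mul_le_mul_of_nonneg_left (hx_bd x hx) hM0
  have hF2meas : ∀ ε, AEStronglyMeasurable (fun t => Y t * (lam t * Real.exp (g ε t)))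
      (volume.restrict (Set.Icc (0:ℝ) τ)) := fun ε =>
    (hYmeas.mul (hlam_meas.mul (Real.measurable_exp.comp (hg_meas ε)))).aestronglyMeasurable
  have hF2int : Integrable (fun t => Y t * (lam t * Real.exp (g ε₀ t)))
      (volume.restrict (Set.Icc (0:ℝ) τ)) := by
    refine ((hlam_int.const_mul (CY * Real.exp (M * (|ε₀| + 1)))).mono'
      (hF2meas ε₀) (Filter.Eventually.of_forall fun t => ?_))
    have h2 : Real.exp (g ε₀ t) ≤ Real.exp (M * (|ε₀| + 1)) :=
      Real.exp_le_exp.mpr (hgle ε₀ (Metric.mem_ball_self one_pos) t)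
    have : |Y t * (lam t * Real.exp (g ε₀ t))|
        = Y t * (lam t * Real.exp (g ε₀ t)) := by
      refine abs_of_nonneg ?_
      exact mul_nonneg (hYnonneg t) (mul_nonneg (hlam_pos t).le (Real.exp_pos _).le)
    rw [Real.norm_eq_abs, this]
    calc Y t * (lam t * Real.exp (g ε₀ t))
        ≤ CY * (lam t * Real.exp (M * (|ε₀| + 1))) := by
          refine mul_le_mul (hYbd t) (mul_le_mul_of_nonneg_left h2 (hlam_pos t).le)
            (mul_nonneg (hlam_pos t).le (Real.exp_pos _).le) hCY0
    _ = CY * Real.exp (M * (|ε₀| + 1)) * lam t := by ring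
  have hT2 := hasDerivAt_integral_of_dominated_loc_of_deriv_le
      (μ := volume.restrict (Set.Icc (0:ℝ) τ))
      (F := fun ε t => Y t * (lam t * Real.exp (g ε t)))
      (F' := fun ε t => Y t * (lam t * (Real.exp (g ε t) * a ε t))) (x₀ := ε₀)
      (bound := fun t => CY * (M * Real.exp (M * (|ε₀| + 1))) * lam t) (Metric.ball_mem_nhds ε₀ one_pos)
      (Filter.Eventually.of_forall hF2meas)
      hF2int
      ((hYmeas.mul (hlam_meas.mul ((Real.measurable_exp.comp (hg_meas ε₀)).mul
        (ha_meas' ε₀)))).aestronglyMeasurable)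
      (Filter.Eventually.of_forall fun t x hx => by
        have h2 : Real.exp (g x t) ≤ Real.exp (M * (|ε₀| + 1)) :=
          Real.exp_le_exp.mpr (hgle x hx t)
        have habs : |Y t * (lam t * (Real.exp (g x t) * a x t))|
            = Y t * (lam t * (Real.exp (g x t) * |a x t|)) := by
          rw [abs_mul, abs_mul, abs_mul, abs_of_nonneg (hYnonneg t),
            abs_of_nonneg (hlam_pos t).le, Real.abs_exp]
        rw [Real.norm_eq_abs, habs]
        calc Y t * (lam t * (Real.exp (g x t) * |a x t|))
            ≤ CY * (lam t * (Real.exp (M * (|ε₀| + 1)) * M)) := by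
              refine mul_le_mul (hYbd t) ?_ ?_ hCY0
              · refine mul_le_mul_of_nonneg_left ?_ (hlam_pos t).le
                exact mul_le_mul h2 (ha_bd x t) (abs_nonneg _) (Real.exp_pos _).le
              · exact mul_nonneg (hlam_pos t).le
                  (mul_nonneg (Real.exp_pos _).le (abs_nonneg _))
        _ = CY * (M * Real.exp (M * (|ε₀| + 1))) * lam t := by ring)
      (hlam_int.const_mul _)
      (Filter.Eventually.of_forall fun t x _ =>
        (((hFTC t x).exp.const_mul (lam t)).const_mul (Y t)))
  have hD := (hT1.2.neg).add hT2.2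
  have hloss_eq : loss = fun ε =>
      -(∫ t, (Real.log (lam t) + g ε t) ∂N)
        + ∫ t in Set.Icc (0:ℝ) τ, Y t * (lam t * Real.exp (g ε t)) := by
    funext ε
    rw [hloss ε]
    congr 1
    · congr 1
      refine integral_congr_ae (Filter.Eventually.of_forall fun t => ?_)
      show Real.log (lamε ε t) = Real.log (lam t) + g ε t
      rw [hlamε, Real.log_mul (hlam_pos t).ne' (Real.exp_ne_zero _), Real.log_exp]
    · refine integral_congr_ae (Filter.Eventually.of_forall fun t => ?_)
      show Y t * lamε ε t = Y t * (lam t * Real.exp (g ε t))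
      rw [hlamε]
  have hDval : (∫ t in Set.Icc (0:ℝ) τ, Y t * (lam t * (Real.exp (g ε₀ t) * a ε₀ t)))
      = ∫ t in Set.Icc (0:ℝ) τ, Y t * a ε₀ t * lamε ε₀ t := by
    refine integral_congr_ae (Filter.Eventually.of_forall fun t => ?_)
    show Y t * (lam t * (Real.exp (g ε₀ t) * a ε₀ t)) = Y t * a ε₀ t * lamε ε₀ t
    rw [hlamε]; ring
  rw [hloss_eq, ← hDval]
  exact hD
end

section
/- Let (X, μ) be a probability space, τ > 0, and let κ' ∈ (0,1], η > 0, K' > 0. Let F : [0,τ] × X → ℝ be measurable with 0 ≤ F(t,x) ≤ 1 for all (t,x) and t ↦ F(t,x) nondecreasing for each x; let S : [0,τ] × X → ℝ be measurable with S(s,x) ≥ κ' for all (s,x); and let g : [0,τ] × X → ℝ be measurable with 0 ≤ g(s,x) ≤ η for all (s,x). For t ∈ [0,τ] define h_t(s,x) = g(s,x) · 𝟙{s ≤ t} · (1 − (F(t,x) − F(s,x))/S(s,x)). Fix 0 ≤ t ≤ t' ≤ τ and assume the Lipschitz-type condition (∫_X (F(t',x) − F(t,x))² dμ(x))^{1/2}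 ≤ K'·(t' − t)^{1/2}. Then ( ∫_X ∫_0^τ (h_{t'}(s,x) − h_t(s,x))² ds dμ(x) )^{1/2} ≤ η·(1 + (2 + K'·√τ)/κ')·(t' − t)^{1/2}. -/
open MeasureTheory

lemma my_sqrt_add_le (a b : ℝ) (ha : 0 ≤ a) (hb : 0 ≤ b) :
    Real.sqrt (a + b) ≤ Real.sqrt a + Real.sqrt b := by
  have h1 := Real.sqrt_nonneg a
  have h2 := Real.sqrt_nonneg b
  have ha' := Real.sq_sqrt ha
  have hb' := Real.sq_sqrt hb
  have hle : a + b ≤ (Real.sqrt a + Real.sqrt b) ^ 2 := by nlinarith [mul_nonneg h1 h2]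
  calc Real.sqrt (a + b) ≤ Real.sqrt ((Real.sqrt a + Real.sqrt b) ^ 2) :=
        Real.sqrt_le_sqrt hle
    _ = Real.sqrt a + Real.sqrt b := Real.sqrt_sq (by positivity)

set_option maxHeartbeats 2000000 in
/-- Verification of Assumption A2 (case l = 1): under the Lipschitz-type
condition on the absolute risk `F`, the `L²(μ ⊗ Lebesgue)` distance between the index
functions `h_{t'}` and `h_t` is of order `(t' − t)^{1/2}`. -/
theorem index_function_L2_bound_case_one {X : Type*} [MeasurableSpace X]
    (μ : Measure X) [IsProbabilityMeasure μ]
    (τ : ℝ) (hτ : 0 < τ) (κ' : ℝ) (hκ : 0 < κ' ∧ κ' ≤ 1) (η : ℝ) (hη : 0 < η)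
    (K' : ℝ) (hK' : 0 < K')
    (F : ℝ → X → ℝ) (hFmeas : Measurable (Function.uncurry F))
    (hF01 : ∀ t x, t ∈ Set.Icc 0 τ → 0 ≤ F t x ∧ F t x ≤ 1)
    (hFmono : ∀ x, MonotoneOn (fun t => F t x) (Set.Icc 0 τ))
    (S : ℝ → X → ℝ) (hSmeas : Measurable (Function.uncurry S))
    (hSlb : ∀ s x, s ∈ Set.Icc 0 τ → κ' ≤ S s x)
    (g : ℝ → X → ℝ) (hgmeas : Measurable (Function.uncurry g))
    (hg : ∀ s x, s ∈ Set.Icc 0 τ → 0 ≤ g s x ∧ g s x ≤ η)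
    (h : ℝ → ℝ → X → ℝ)
    (hdef : ∀ t s x, h t s x =
      g s x * (if s ≤ t then (1:ℝ) else 0) * (1 - (F t x - F s x) / S s x))
    (t t' : ℝ) (ht : 0 ≤ t) (htt' : t ≤ t') (ht' : t' ≤ τ)
    (hLip : Real.sqrt (∫ x, (F t' x - F t x) ^ 2 ∂μ) ≤ K' * Real.sqrt (t' - t)) :
    Real.sqrt (∫ x, (∫ s in Set.Ioc (0:ℝ) τ, (h t' s x - h t s x) ^ 2) ∂μ) ≤
      η * (1 + (2 + K' * Real.sqrt τ) / κ') * Real.sqrt (t' - t) := by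
  obtain ⟨hκ0, hκ1⟩ := hκ
  have htτ : t ≤ τ := le_trans htt' ht'
  have ht'0 : 0 ≤ t' := le_trans ht htt'
  have htmem : t ∈ Set.Icc (0:ℝ) τ := ⟨ht, htτ⟩
  have ht'mem : t' ∈ Set.Icc (0:ℝ) τ := ⟨ht'0, ht'⟩
  have hDF0 : ∀ x, 0 ≤ F t' x - F t x := fun x =>
    sub_nonneg.2 (hFmono x htmem ht'mem htt')
  have hDF1 : ∀ x, F t' x - F t x ≤ 1 := by
    intro x
    have h1 := (hF01 t' x ht'mem).2
    have h2 := (hF01 t x htmem).1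
    linarith
  set C2 : ℝ := (η * (1 + 1/κ')) ^ 2 with hC2
  have hC2nn : 0 ≤ C2 := sq_nonneg _
  -- inner bound
  have inner_bound : ∀ x, (∫ s in Set.Ioc (0:ℝ) τ, (h t' s x - h t s x) ^ 2) ≤
      τ * (η * (F t' x - F t x) / κ') ^ 2 + (t' - t) * C2 := by
    intro x
    set C1 : ℝ := (η * (F t' x - F t x) / κ') ^ 2 with hC1
    have hC1nn : 0 ≤ C1 := sq_nonneg _
    set φ : ℝ → ℝ := fun s => (Set.Ioc (0:ℝ) t).indicator (fun _ => C1) s +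
      (Set.Ioc t t').indicator (fun _ => C2) s with hφ
    haveI : IsFiniteMeasure (volume.restrict (Set.Ioc (0:ℝ) τ)) := ⟨by
      rw [Measure.restrict_apply_univ, Real.volume_Ioc]
      exact ENNReal.ofReal_lt_top⟩
    have hint1 : Integrable ((Set.Ioc (0:ℝ) t).indicator (fun _ => C1))
        (volume.restrict (Set.Ioc (0:ℝ) τ)) :=
      (integrable_const C1).indicator measurableSet_Ioc
    have hint2 : Integrable ((Set.Ioc t t').indicator (fun _ => C2))
        (volume.restrict (Set.Ioc (0:ℝ) τ)) :=
      (integrable_const C2).indicator measurableSet_Ioc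
    have hφint : Integrable φ (volume.restrict (Set.Ioc (0:ℝ) τ)) := hint1.add hint2
    have hbound : ∀ s ∈ Set.Ioc (0:ℝ) τ, (h t' s x - h t s x) ^ 2 ≤ φ s := by
      intro s hs
      have hsmem : s ∈ Set.Icc (0:ℝ) τ := ⟨hs.1.le, hs.2⟩
      have hg0 := (hg s x hsmem).1
      have hgη := (hg s x hsmem).2
      have hS := hSlb s x hsmem
      have hSpos : 0 < S s x := lt_of_lt_of_le hκ0 hS
      rcases le_or_gt s t with hst | hst
      · -- s ≤ t
        have hst' : s ≤ t' := le_trans hst htt'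
        have hφs : φ s = C1 := by
          simp [hφ, Set.indicator_apply, Set.mem_Ioc, hs.1, hst, not_lt.2 hst]
        have heq : h t' s x - h t s x =
            -(g s x * ((F t' x - F t x) / S s x)) := by
          rw [hdef, hdef, if_pos hst', if_pos hst]
          field_simp
          ring
        rw [hφs, heq, neg_sq]
        have h2 : (F t' x - F t x) / S s x ≤ (F t' x - F t x) / κ' := by
          gcongr
          exact hDF0 x
        have h3 : g s x * ((F t' x - F t x) / S s x) ≤ η * ((F t' x - F t x) / κ') :=
          mul_le_mul hgη h2 (div_nonneg (hDF0 x) hSpos.le) hη.le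
        have h4 : 0 ≤ g s x * ((F t' x - F t x) / S s x) :=
          mul_nonneg hg0 (div_nonneg (hDF0 x) hSpos.le)
        have heq2 : C1 = (η * ((F t' x - F t x) / κ')) ^ 2 := by rw [hC1]; ring
        rw [heq2]
        exact pow_le_pow_left₀ h4 h3 2
      · rcases le_or_gt s t' with hst' | hst'
        · -- t < s ≤ t'
          have hnst : ¬ s ≤ t := not_le.2 hst
          have hφs : φ s = C2 := by
            simp [hφ, Set.indicator_apply, Set.mem_Ioc, hst, hst', hnst]
          have heq : h t' s x - h t s x =
              g s x * (1 - (F t' x - F s x) / S s x) := by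
            rw [hdef, hdef, if_pos hst', if_neg hnst]
            ring
          rw [hφs, heq]
          have hFst' : F s x ≤ F t' x := hFmono x hsmem ht'mem hst'
          have hFs0 := (hF01 s x hsmem).1
          have hFt'1 := (hF01 t' x ht'mem).2
          have hu0 : 0 ≤ (F t' x - F s x) / S s x :=
            div_nonneg (by linarith) hSpos.le
          have hu1 : (F t' x - F s x) / S s x ≤ 1 / κ' :=
            div_le_div₀ (by linarith) (by linarith) hκ0 hS
          have hgu : g s x * ((F t' x - F s x) / S s x) ≤ η * (1 / κ') :=
            mul_le_mul hgη hu1 hu0 hη.le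
          have hguo : 0 ≤ g s x * ((F t' x - F s x) / S s x) := mul_nonneg hg0 hu0
          rw [hC2]
          apply sq_le_sq'
          · nlinarith
          · nlinarith [mul_nonneg hη.le (le_of_lt (one_div_pos.2 hκ0))]
        · -- t' < s
          have hnst : ¬ s ≤ t := not_le.2 hst
          have hnst' : ¬ s ≤ t' := not_le.2 hst'
          have hφs : φ s = 0 := by
            simp [hφ, Set.indicator_apply, Set.mem_Ioc, hnst, hnst']
          have heq : h t' s x - h t s x = 0 := by
            rw [hdef, hdef, if_neg hnst', if_neg hnst]
            ring
          rw [hφs, heq]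
          norm_num
    have h1 : (∫ s in Set.Ioc (0:ℝ) τ, (h t' s x - h t s x) ^ 2) ≤
        ∫ s in Set.Ioc (0:ℝ) τ, φ s :=
      integral_mono_of_nonneg (Filter.Eventually.of_forall fun s => sq_nonneg _) hφint
        ((ae_restrict_iff' measurableSet_Ioc).2 (Filter.Eventually.of_forall hbound))
    have h2 : (∫ s in Set.Ioc (0:ℝ) τ, φ s) = t * C1 + (t' - t) * C2 := by
      rw [hφ]
      rw [integral_add hint1 hint2, setIntegral_indicator measurableSet_Ioc,
        setIntegral_indicator measurableSet_Ioc, Set.Ioc_inter_Ioc, Set.Ioc_inter_Ioc,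
        setIntegral_const, setIntegral_const]
      rw [max_self, min_eq_right htτ, max_eq_right ht, min_eq_right ht']
      rw [Real.volume_real_Ioc_of_le ht, Real.volume_real_Ioc_of_le htt']
      simp [smul_eq_mul]
    have h3 : t * C1 ≤ τ * C1 := mul_le_mul_of_nonneg_right htτ hC1nn
    linarith
  -- outer bound
  have hDFm : Measurable fun x => F t' x - F t x :=
    (hFmeas.comp measurable_prodMk_left).sub (hFmeas.comp measurable_prodMk_left)
  have hsqle : ∀ x, (η * (F t' x - F t x) / κ') ^ 2 ≤ (η / κ') ^ 2 := by
    intro x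
    have heq : (η * (F t' x - F t x) / κ') ^ 2 = (η / κ') ^ 2 * (F t' x - F t x) ^ 2 := by
      ring
    have hd2 : (F t' x - F t x) ^ 2 ≤ 1 := by nlinarith [hDF0 x, hDF1 x]
    nlinarith [sq_nonneg (η / κ')]
  have hBm : Measurable fun x => τ * (η * (F t' x - F t x) / κ') ^ 2 + (t' - t) * C2 := by
    apply Measurable.add _ measurable_const
    exact (((hDFm.const_mul η).div_const κ').pow_const 2).const_mul τ
  have hBint : Integrable (fun x => τ * (η * (F t' x - F t x) / κ') ^ 2 + (t' - t) * C2) μ := by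
    apply Integrable.mono' (integrable_const (τ * (η / κ') ^ 2 + (t' - t) * C2))
      hBm.aestronglyMeasurable
    filter_upwards with x
    have hnn : 0 ≤ τ * (η * (F t' x - F t x) / κ') ^ 2 + (t' - t) * C2 :=
      add_nonneg (by positivity) (mul_nonneg (by linarith) hC2nn)
    rw [Real.norm_eq_abs, abs_of_nonneg hnn]
    have h5 := mul_le_mul_of_nonneg_left (hsqle x) hτ.le
    linarith
  have houter : (∫ x, (∫ s in Set.Ioc (0:ℝ) τ, (h t' s x - h t s x) ^ 2) ∂μ) ≤
      ∫ x, (τ * (η * (F t' x - F t x) / κ') ^ 2 + (t' - t) * C2) ∂μ :=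
    integral_mono_of_nonneg
      (Filter.Eventually.of_forall fun x => integral_nonneg fun s => sq_nonneg _)
      hBint (Filter.Eventually.of_forall inner_bound)
  have hint3 : Integrable (fun x => τ * (η * (F t' x - F t x) / κ') ^ 2) μ := by
    apply Integrable.mono' (integrable_const (τ * (η / κ') ^ 2))
      (((((hDFm.const_mul η).div_const κ').pow_const 2).const_mul τ).aestronglyMeasurable)
    filter_upwards with x
    rw [Real.norm_eq_abs, abs_of_nonneg (by positivity)]
    have := hsqle x
    nlinarith
  have hBval : (∫ x, (τ * (η * (F t' x - F t x) / κ') ^ 2 + (t' - t) * C2) ∂μ) =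
      τ * (η / κ') ^ 2 * (∫ x, (F t' x - F t x) ^ 2 ∂μ) + (t' - t) * C2 := by
    rw [integral_add hint3 (integrable_const _), integral_const, probReal_univ]
    simp only [ENNReal.toReal_one, one_smul]
    congr 1
    have : (fun x => τ * (η * (F t' x - F t x) / κ') ^ 2) =
        fun x => (τ * (η / κ') ^ 2) * (F t' x - F t x) ^ 2 := by
      funext x; ring
    rw [this, integral_const_mul]
  set J : ℝ := ∫ x, (F t' x - F t x) ^ 2 ∂μ with hJ
  have hJ0 : 0 ≤ J := integral_nonneg fun x => sq_nonneg _
  have hstep1 : Real.sqrt (∫ x, (∫ s in Set.Ioc (0:ℝ) τ, (h t' s x - h t s x) ^ 2) ∂μ) ≤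
      Real.sqrt (τ * (η / κ') ^ 2 * J + (t' - t) * C2) := by
    apply Real.sqrt_le_sqrt
    calc (∫ x, (∫ s in Set.Ioc (0:ℝ) τ, (h t' s x - h t s x) ^ 2) ∂μ) ≤
        ∫ x, (τ * (η * (F t' x - F t x) / κ') ^ 2 + (t' - t) * C2) ∂μ := houter
      _ = τ * (η / κ') ^ 2 * J + (t' - t) * C2 := hBval
  have hstep2 : Real.sqrt (τ * (η / κ') ^ 2 * J + (t' - t) * C2) ≤
      Real.sqrt (τ * (η / κ') ^ 2 * J) + Real.sqrt ((t' - t) * C2) :=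
    my_sqrt_add_le _ _ (by positivity) (mul_nonneg (by linarith) hC2nn)
  have ha : Real.sqrt (τ * (η / κ') ^ 2 * J) =
      (Real.sqrt τ * (η / κ')) * Real.sqrt J := by
    have heq : τ * (η / κ') ^ 2 * J = (Real.sqrt τ * (η / κ')) ^ 2 * J := by
      rw [mul_pow, Real.sq_sqrt hτ.le]
    rw [heq, Real.sqrt_mul (sq_nonneg _), Real.sqrt_sq (by positivity)]
  have hb : Real.sqrt ((t' - t) * C2) = Real.sqrt (t' - t) * (η * (1 + 1/κ')) := by
    rw [hC2, Real.sqrt_mul (by linarith), Real.sqrt_sq (by positivity)]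
  have hsqJ : Real.sqrt J ≤ K' * Real.sqrt (t' - t) := hLip
  have hcoeff : Real.sqrt τ * (η / κ') * K' + η * (1 + 1/κ') ≤
      η * (1 + (2 + K' * Real.sqrt τ) / κ') := by
    have hdiff : η * (1 + (2 + K' * Real.sqrt τ) / κ') -
        (Real.sqrt τ * (η / κ') * K' + η * (1 + 1/κ')) = η / κ' := by
      field_simp
      ring
    have : 0 < η / κ' := div_pos hη hκ0
    linarith
  have hst0 : 0 ≤ Real.sqrt (t' - t) := Real.sqrt_nonneg _
  have hsτ0 : 0 ≤ Real.sqrt τ := Real.sqrt_nonneg _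
  calc Real.sqrt (∫ x, (∫ s in Set.Ioc (0:ℝ) τ, (h t' s x - h t s x) ^ 2) ∂μ) ≤
      Real.sqrt (τ * (η / κ') ^ 2 * J) + Real.sqrt ((t' - t) * C2) :=
        le_trans hstep1 hstep2
    _ = (Real.sqrt τ * (η / κ')) * Real.sqrt J + Real.sqrt (t' - t) * (η * (1 + 1/κ')) := by
        rw [ha, hb]
    _ ≤ (Real.sqrt τ * (η / κ')) * (K' * Real.sqrt (t' - t)) +
        Real.sqrt (t' - t) * (η * (1 + 1/κ')) := by
        gcongr
    _ ≤ η * (1 + (2 + K' * Real.sqrt τ) / κ') * Real.sqrt (t' - t) := by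
        nlinarith [hcoeff, hst0]
end

section
/- Let (X, μ) be a probability space, τ > 0, and let κ' ∈ (0,1], η > 0, K' > 0. Let F : [0,τ] × X → ℝ be measurable with 0 ≤ F(t,x) ≤ 1 for all (t,x) and t ↦ F(t,x) nondecreasing for each x; let S : [0,τ] × X → ℝ be measurable with S(s,x) ≥ κ' for all (s,x); and let g : [0,τ] × X → ℝ be measurable with 0 ≤ g(s,x) ≤ η for all (s,x). For t ∈ [0,τ] define h̃_t(s,x) = −g(s,x) · 𝟙{s ≤ t} · (F(t,x) − F(s,x))/S(s,x). Fix 0 ≤ t ≤ t' ≤ τ and assume the Lipschitz-type condition (∫_X (F(t',x) − F(t,x))² dμ(x))^{1/2} ≤ K'·(t' − t)^{1/2}. Then ( ∫_X ∫_0^τ (h̃_{t'}(s,x) − h̃_t(s,x))² ds dμ(x) )^{1/2} ≤ (η/κ')·(1 + K'·√τ)·(t' − t)^{1/2}. -/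
open MeasureTheory

set_option maxHeartbeats 1000000 in
/-- Verification of Assumption A2 (case l ≠ 1): under the Lipschitz-type
condition on the absolute risk `F`, the `L²(μ ⊗ Lebesgue)` distance between the index
functions `h̃_{t'}` and `h̃_t`, where
`h̃_t(s,x) = −g(s,x)·𝟙{s ≤ t}·(F(t,x) − F(s,x))/S(s,x)`, is of order `(t' − t)^{1/2}`. -/
theorem index_function_L2_bound_other_cause {X : Type*} [MeasurableSpace X]
    (μ : Measure X) [IsProbabilityMeasure μ]
    (τ : ℝ) (hτ : 0 < τ) (κ' : ℝ) (hκ : 0 < κ' ∧ κ' ≤ 1) (η : ℝ) (hη : 0 < η)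
    (K' : ℝ) (hK' : 0 < K')
    (F : ℝ → X → ℝ) (hFmeas : Measurable (Function.uncurry F))
    (hF01 : ∀ t x, t ∈ Set.Icc 0 τ → 0 ≤ F t x ∧ F t x ≤ 1)
    (hFmono : ∀ x, MonotoneOn (fun t => F t x) (Set.Icc 0 τ))
    (S : ℝ → X → ℝ) (hSmeas : Measurable (Function.uncurry S))
    (hSlb : ∀ s x, s ∈ Set.Icc 0 τ → κ' ≤ S s x)
    (g : ℝ → X → ℝ) (hgmeas : Measurable (Function.uncurry g))
    (hg : ∀ s x, s ∈ Set.Icc 0 τ → 0 ≤ g s x ∧ g s x ≤ η)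
    (ht' : ℝ → ℝ → X → ℝ)
    (hdef : ∀ t s x, ht' t s x =
      -(g s x * (if s ≤ t then (1:ℝ) else 0) * ((F t x - F s x) / S s x)))
    (t t'' : ℝ) (htnn : 0 ≤ t) (htt : t ≤ t'') (htle : t'' ≤ τ)
    (hLip : Real.sqrt (∫ x, (F t'' x - F t x) ^ 2 ∂μ) ≤ K' * Real.sqrt (t'' - t)) :
    Real.sqrt (∫ x, (∫ s in Set.Ioc (0:ℝ) τ, (ht' t'' s x - ht' t s x) ^ 2) ∂μ) ≤
      (η / κ') * (1 + K' * Real.sqrt τ) * Real.sqrt (t'' - t) := by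

  set C := η / κ' with hC
  have hCpos : 0 < C := div_pos hη hκ.1
  set Δ := t'' - t with hΔ
  have hΔnn : 0 ≤ Δ := sub_nonneg.2 htt
  have htIcc : t ∈ Set.Icc (0:ℝ) τ := ⟨htnn, htt.trans htle⟩
  have ht''Icc : t'' ∈ Set.Icc (0:ℝ) τ := ⟨htnn.trans htt, htle⟩
  -- ΔF
  set ΔF : X → ℝ := fun x => F t'' x - F t x with hΔFdef
  have hΔFnn : ∀ x, 0 ≤ ΔF x := fun x => sub_nonneg.2 (hFmono x htIcc ht''Icc htt)
  have hΔFle : ∀ x, ΔF x ≤ 1 := fun x =>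
    sub_le_iff_le_add.2 (le_trans (hF01 t'' x ht''Icc).2 (le_add_of_nonneg_right (hF01 t x htIcc).1))
  -- measurability of ΔF
  have hΔFmeas : Measurable ΔF :=
    (hFmeas.comp measurable_prodMk_left).sub (hFmeas.comp measurable_prodMk_left)
  have hΔF2int : Integrable (fun x => (ΔF x) ^ 2) μ := by
    refine Integrable.mono' (integrable_const 1) (hΔFmeas.pow_const 2).aestronglyMeasurable ?_
    filter_upwards with x
    have h1 := hΔFnn x
    have h2 := hΔFle x
    rw [Real.norm_eq_abs, abs_of_nonneg (by positivity)]
    nlinarith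
  have hA0 : 0 ≤ ∫ x, (ΔF x) ^ 2 ∂μ := integral_nonneg fun x => by positivity
  have hA : (∫ x, (ΔF x) ^ 2 ∂μ) ≤ K' ^ 2 * Δ := by
    have h1 : (∫ x, (ΔF x) ^ 2 ∂μ) = (Real.sqrt (∫ x, (ΔF x) ^ 2 ∂μ)) ^ 2 :=
      (Real.sq_sqrt hA0).symm
    have h2 : (Real.sqrt (∫ x, (ΔF x) ^ 2 ∂μ)) ^ 2 ≤ (K' * Real.sqrt Δ) ^ 2 :=
      pow_le_pow_left₀ (Real.sqrt_nonneg _) hLip 2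
    have h3 : (K' * Real.sqrt Δ) ^ 2 = K' ^ 2 * Δ := by
      rw [mul_pow, Real.sq_sqrt hΔnn]
    linarith [h1 ▸ h2, h3 ▸ h2]
  -- inner integral bound
  have hI : ∀ x, (∫ s in Set.Ioc (0:ℝ) τ, (ht' t'' s x - ht' t s x) ^ 2) ≤
      C ^ 2 * (τ * (ΔF x) ^ 2 + Δ) := by
    intro x
    set b : ℝ → ℝ := fun s =>
      (ΔF x) ^ 2 * Set.indicator (Set.Ioc 0 t) (fun _ => (1:ℝ)) s +
        Set.indicator (Set.Ioc t t'') (fun _ => (1:ℝ)) s with hbdef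
    have hind1 : Integrable (Set.indicator (Set.Ioc 0 t) (fun _ => (1:ℝ)))
        ((volume : Measure ℝ).restrict (Set.Ioc 0 τ)) := by
      refine Integrable.restrict ?_
      rw [integrable_indicator_iff measurableSet_Ioc]
      exact (integrableOn_const_iff).2 (Or.inr measure_Ioc_lt_top)
    have hind2 : Integrable (Set.indicator (Set.Ioc t t'') (fun _ => (1:ℝ)))
        ((volume : Measure ℝ).restrict (Set.Ioc 0 τ)) := by
      refine Integrable.restrict ?_
      rw [integrable_indicator_iff measurableSet_Ioc]
      exact (integrableOn_const_iff).2 (Or.inr measure_Ioc_lt_top)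
    have hbint : Integrable (fun s => C ^ 2 * b s)
        ((volume : Measure ℝ).restrict (Set.Ioc 0 τ)) :=
      ((hind1.const_mul _).add hind2).const_mul _
    have hptwise : ∀ s ∈ Set.Ioc (0:ℝ) τ,
        (ht' t'' s x - ht' t s x) ^ 2 ≤ C ^ 2 * b s := by
      intro s hs
      have hsIcc : s ∈ Set.Icc (0:ℝ) τ := ⟨hs.1.le, hs.2⟩
      obtain ⟨hg0, hgη⟩ := hg s x hsIcc
      have hS := hSlb s x hsIcc
      have hSpos : 0 < S s x := lt_of_lt_of_le hκ.1 hS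
      have hgS : g s x / S s x ≤ C := div_le_div₀ hη.le hgη hκ.1 hS
      have hgS0 : 0 ≤ g s x / S s x := div_nonneg hg0 hSpos.le
      have hgS2 : (g s x / S s x) ^ 2 ≤ C ^ 2 := pow_le_pow_left₀ hgS0 hgS 2
      by_cases h1 : s ≤ t
      · have h2 : s ≤ t'' := h1.trans htt
        have hb1 : b s = (ΔF x) ^ 2 := by
          have e1 : s ∈ Set.Ioc (0:ℝ) t := ⟨hs.1, h1⟩
          have e2 : s ∉ Set.Ioc t t'' := fun hmem => absurd hmem.1 (not_lt.2 h1)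
          simp [hbdef, Set.indicator_of_mem e1, Set.indicator_of_notMem e2]
        have key : ht' t'' s x - ht' t s x = -(g s x / S s x) * ΔF x := by
          rw [hdef, hdef, if_pos h1, if_pos h2]
          show _ = -(g s x / S s x) * (F t'' x - F t x)
          ring
        rw [key, hb1]
        have hsq2 : (-(g s x / S s x) * ΔF x) ^ 2 =
            (g s x / S s x) ^ 2 * (ΔF x) ^ 2 := by ring
        rw [hsq2]
        exact mul_le_mul_of_nonneg_right hgS2 (sq_nonneg _)
      · by_cases h2 : s ≤ t''
        · have hb1 : b s = 1 := by
            have e1 : s ∉ Set.Ioc (0:ℝ) t := fun hmem => h1 hmem.2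
            have e2 : s ∈ Set.Ioc t t'' := ⟨not_le.1 h1, h2⟩
            simp [hbdef, Set.indicator_of_notMem e1, Set.indicator_of_mem e2]
          have key : ht' t'' s x - ht' t s x = -(g s x / S s x) * (F t'' x - F s x) := by
            rw [hdef, hdef, if_pos h2, if_neg h1]
            ring
          rw [key, hb1, mul_one]
          have hsq2 : (-(g s x / S s x) * (F t'' x - F s x)) ^ 2 =
              (g s x / S s x) ^ 2 * (F t'' x - F s x) ^ 2 := by ring
          rw [hsq2]
          have hFs0 : 0 ≤ F s x := (hF01 s x hsIcc).1
          have hFs1 : F s x ≤ F t'' x := hFmono x hsIcc ht''Icc h2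
          have hFt1 : F t'' x ≤ 1 := (hF01 t'' x ht''Icc).2
          have hsq : (F t'' x - F s x) ^ 2 ≤ 1 := by nlinarith
          have base : (g s x / S s x) ^ 2 * (F t'' x - F s x) ^ 2 ≤ C ^ 2 * 1 :=
            mul_le_mul hgS2 hsq (sq_nonneg _) (sq_nonneg _)
          linarith [base]
        · have hb1 : b s = 0 := by
            have e1 : s ∉ Set.Ioc (0:ℝ) t := fun hmem => h1 hmem.2
            have e2 : s ∉ Set.Ioc t t'' := fun hmem => h2 hmem.2
            simp [hbdef, Set.indicator_of_notMem e1, Set.indicator_of_notMem e2]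
          have key : ht' t'' s x - ht' t s x = 0 := by
            rw [hdef, hdef, if_neg h2, if_neg h1]
            ring
          rw [key, hb1, mul_zero]
          simp
    have hmono : (∫ s in Set.Ioc (0:ℝ) τ, (ht' t'' s x - ht' t s x) ^ 2) ≤
        ∫ s in Set.Ioc (0:ℝ) τ, C ^ 2 * b s := by
      refine integral_mono_of_nonneg ?_ hbint ?_
      · exact Filter.Eventually.of_forall fun s => by positivity
      · exact (ae_restrict_iff' measurableSet_Ioc).2
          (Filter.Eventually.of_forall hptwise)
    have hcomp : (∫ s in Set.Ioc (0:ℝ) τ, C ^ 2 * b s) = C ^ 2 * ((ΔF x) ^ 2 * t + Δ) := by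
      rw [integral_const_mul]
      congr 1
      rw [integral_add (hind1.const_mul _) hind2, integral_const_mul]
      have e1 : (∫ s in Set.Ioc (0:ℝ) τ,
          Set.indicator (Set.Ioc 0 t) (fun _ => (1:ℝ)) s) = t := by
        rw [setIntegral_indicator measurableSet_Ioc]
        have : Set.Ioc (0:ℝ) τ ∩ Set.Ioc 0 t = Set.Ioc 0 t := by
          rw [Set.Ioc_inter_Ioc]
          simp [min_eq_right (htt.trans htle), max_self]
        rw [this]
        simp [Real.volume_Ioc, ENNReal.toReal_ofReal htnn, htnn]
      have e2 : (∫ s in Set.Ioc (0:ℝ) τ,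
          Set.indicator (Set.Ioc t t'') (fun _ => (1:ℝ)) s) = Δ := by
        rw [setIntegral_indicator measurableSet_Ioc]
        have : Set.Ioc (0:ℝ) τ ∩ Set.Ioc t t'' = Set.Ioc t t'' := by
          rw [Set.Ioc_inter_Ioc]
          simp [min_eq_right htle, max_eq_right htnn]
        rw [this]
        simp [Real.volume_Ioc, ENNReal.toReal_ofReal hΔnn, hΔ, htt]
      rw [e1, e2]
    have hle2 : C ^ 2 * ((ΔF x) ^ 2 * t + Δ) ≤ C ^ 2 * (τ * (ΔF x) ^ 2 + Δ) := by
      have h1 : (ΔF x) ^ 2 * t ≤ τ * (ΔF x) ^ 2 := by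
        rw [mul_comm]
        exact mul_le_mul_of_nonneg_right (htt.trans htle) (by positivity)
      nlinarith [sq_nonneg C]
    linarith [hcomp ▸ hmono]
  -- outer integral bound
  have hmajint : Integrable (fun x => C ^ 2 * (τ * (ΔF x) ^ 2 + Δ)) μ :=
    ((hΔF2int.const_mul τ).add (integrable_const Δ)).const_mul _
  have houter : (∫ x, (∫ s in Set.Ioc (0:ℝ) τ, (ht' t'' s x - ht' t s x) ^ 2) ∂μ) ≤
      ∫ x, C ^ 2 * (τ * (ΔF x) ^ 2 + Δ) ∂μ := by
    refine integral_mono_of_nonneg ?_ hmajint ?_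
    · exact Filter.Eventually.of_forall fun x => integral_nonneg fun s => by positivity
    · exact Filter.Eventually.of_forall hI
  have hcomp2 : (∫ x, C ^ 2 * (τ * (ΔF x) ^ 2 + Δ) ∂μ)
      = C ^ 2 * (τ * (∫ x, (ΔF x) ^ 2 ∂μ) + Δ) := by
    rw [integral_const_mul, integral_add (hΔF2int.const_mul τ) (integrable_const Δ),
      integral_const_mul, integral_const]
    simp
  have hfinal : (∫ x, (∫ s in Set.Ioc (0:ℝ) τ, (ht' t'' s x - ht' t s x) ^ 2) ∂μ) ≤
      (C * (1 + K' * Real.sqrt τ) * Real.sqrt Δ) ^ 2 := by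
    have hsτ : Real.sqrt τ ^ 2 = τ := Real.sq_sqrt hτ.le
    have hsΔ : Real.sqrt Δ ^ 2 = Δ := Real.sq_sqrt hΔnn
    have h1 := hcomp2 ▸ houter
    have hsτ0 : 0 ≤ Real.sqrt τ := Real.sqrt_nonneg τ
    have hsΔ0 : 0 ≤ Real.sqrt Δ := Real.sqrt_nonneg Δ
    have e1 : τ * (∫ x, (ΔF x) ^ 2 ∂μ) + Δ ≤ (1 + K' * Real.sqrt τ) ^ 2 * Δ := by
      nlinarith [mul_le_mul_of_nonneg_left hA hτ.le,
        mul_nonneg (mul_nonneg hK'.le hsτ0) hΔnn]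
    have e2 : C ^ 2 * (τ * (∫ x, (ΔF x) ^ 2 ∂μ) + Δ) ≤
        C ^ 2 * ((1 + K' * Real.sqrt τ) ^ 2 * Δ) :=
      mul_le_mul_of_nonneg_left e1 (sq_nonneg C)
    have e3 : (C * (1 + K' * Real.sqrt τ) * Real.sqrt Δ) ^ 2 =
        C ^ 2 * ((1 + K' * Real.sqrt τ) ^ 2 * Δ) := by
      rw [mul_pow, mul_pow, hsΔ]
      ring
    linarith
  calc Real.sqrt (∫ x, (∫ s in Set.Ioc (0:ℝ) τ, (ht' t'' s x - ht' t s x) ^ 2) ∂μ)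
      ≤ Real.sqrt ((C * (1 + K' * Real.sqrt τ) * Real.sqrt Δ) ^ 2) :=
        Real.sqrt_le_sqrt hfinal
    _ = C * (1 + K' * Real.sqrt τ) * Real.sqrt Δ := Real.sqrt_sq (by positivity)
end
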